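/- Let (M_n)_{n≥1} satisfy M_n M_m ≤ M_{n+m−1} for all n, m ≥ 1. Then the algebra z·ℂ[[z]]_{(M_n)} of formal power series f = ∑_{n≥1} f_n z^n with |f_n| ≤ c_1 c_2^n M_n (for some c_1, c_2 > 0 depending on f) is closed under composition: if f, g ∈ z·ℂ[[z]]_{(M_n)} then f ∘ g ∈ z·ℂ[[z]]_{(M_n)}. -/

import Mathlib

open Finset

/-- Compositions of `n` into `m` positive parts. -/
def comps (m n : ℕ) : Finset (Fin m → ℕ) :=
  (Finset.Nat.antidiagonalTuple m n).filter fun t => ∀ i, 1 ≤ t i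

/-- `f` belongs to the class `z·ℂ[[z]]_{(M_n)}`. -/
def InClass (M : ℕ → ℝ) (f : ℕ → ℂ) : Prop :=
  ∃ c₁ > (0 : ℝ), ∃ c₂ > (0 : ℝ), ∀ n : ℕ, 1 ≤ n → ‖f n‖ ≤ c₁ * c₂ ^ n * M n

/-- Coefficients of the composition `f ∘ g` of formal power series without
constant term: `(f∘g)_n = ∑_{m=1}^n f_m ∑_{n₁+⋯+n_m=n, nᵢ≥1} g_{n₁}⋯g_{n_m}`. -/
noncomputable def compCoef (f g : ℕ → ℂ) : ℕ → ℂ := fun n =>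
  ∑ m ∈ Finset.Icc 1 n, f m * ∑ t ∈ comps m n, ∏ i, g (t i)

lemma mem_comps {m n : ℕ} {t : Fin m → ℕ} :
    t ∈ comps m n ↔ (∑ i, t i = n) ∧ ∀ i, 1 ≤ t i := by
  simp [comps, Finset.Nat.mem_antidiagonalTuple]

lemma comps_eq_empty {m n : ℕ} (h : n < m) : comps m n = ∅ := by
  ext t
  simp only [Finset.notMem_empty, iff_false, mem_comps, not_and]
  intro hs ht
  have : (m : ℕ) ≤ n := by
    calc (m : ℕ) = ∑ _i : Fin m, 1 := by simp
    _ ≤ ∑ i, t i := Finset.sum_le_sum fun i _ => ht i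
    _ = n := hs
  omega

lemma comps_one {n : ℕ} (hn : 1 ≤ n) : comps 1 n = {![n]} := by
  ext t
  simp only [mem_comps, Finset.mem_singleton]
  constructor
  · rintro ⟨hs, -⟩
    funext i
    fin_cases i
    simpa using hs
  · rintro rfl
    refine ⟨by simp, fun i => ?_⟩
    fin_cases i
    simpa using hn

lemma sum_comps_succ {m n : ℕ} (F : (Fin (m + 1) → ℕ) → ℝ) :
    ∑ t ∈ comps (m + 1) n, F t =
      ∑ k ∈ Finset.Icc 1 n, ∑ s ∈ comps m (n - k), F (Fin.cons k s) := by
  rw [← Finset.sum_sigma (Finset.Icc 1 n) (fun k => comps m (n - k))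
    (fun p => F (Fin.cons p.1 p.2))]
  refine Finset.sum_bij' (fun t _ => (⟨t 0, Fin.tail t⟩ : (_ : ℕ) × (Fin m → ℕ)))
    (fun p _ => Fin.cons p.1 p.2) ?_ ?_ ?_ ?_ ?_
  · intro t ht
    rw [mem_comps] at ht
    obtain ⟨hs, hpos⟩ := ht
    have h0 : t 0 ≤ n := by
      have h := Finset.single_le_sum (f := t) (fun i _ => Nat.zero_le _) (Finset.mem_univ 0)
      omega
    refine Finset.mem_sigma.2 ⟨Finset.mem_Icc.2 ⟨hpos 0, h0⟩, mem_comps.2 ⟨?_, fun i => hpos i.succ⟩⟩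
    have h2 : t 0 + ∑ i : Fin m, Fin.tail t i = n := by
      rw [← hs, Fin.sum_univ_succ]; rfl
    exact Nat.eq_sub_of_add_eq' h2
  · intro p hp
    rw [Finset.mem_sigma] at hp
    obtain ⟨hk, hs⟩ := hp
    rw [Finset.mem_Icc] at hk
    rw [mem_comps] at hs ⊢
    constructor
    · rw [Fin.sum_univ_succ]
      simp only [Fin.cons_zero, Fin.cons_succ]
      rw [hs.1]
      omega
    · intro i
      refine Fin.cases ?_ ?_ i
      · simpa using hk.1
      · intro j; simpa using hs.2 j
  · intro t _
    exact Fin.cons_self_tail t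
  · intro p _
    simp [Fin.tail_cons]
  · intro t _
    simp

lemma key_bound (M : ℕ → ℝ) (hpos : ∀ n : ℕ, 1 ≤ n → 0 < M n)
    (hM : ∀ n : ℕ, 1 ≤ n → ∀ m : ℕ, 1 ≤ m → M n * M m ≤ M (n + m - 1)) :
    ∀ m : ℕ, 1 ≤ m → ∀ n : ℕ,
      ∑ t ∈ comps m n, ∏ i, M (t i) ≤ 2 ^ n * M (n - m + 1) := by
  intro m hm
  induction m, hm using Nat.le_induction with
  | base =>
    intro n
    rcases Nat.eq_zero_or_pos n with rfl | hn
    · simp [comps_eq_empty (by norm_num : (0:ℕ) < 1), le_of_lt (hpos 1 le_rfl)]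
    · rw [comps_one hn]
      have : (∑ t ∈ ({![n]} : Finset (Fin 1 → ℕ)), ∏ i, M (t i)) = M n := by simp
      rw [this]
      have h1 : n - 1 + 1 = n := by omega
      rw [h1]
      nlinarith [hpos n hn, (one_le_pow₀ (by norm_num : (1:ℝ) ≤ 2) : (1:ℝ) ≤ 2 ^ n)]
  | succ m hm ih =>
    intro n
    have hMn : 0 < M (n - (m + 1) + 1) := hpos _ (by omega)
    rw [sum_comps_succ]
    have hterm : ∀ k ∈ Finset.Icc 1 n,
        (∑ s ∈ comps m (n - k), ∏ i, M ((Fin.cons k s : Fin (m+1) → ℕ) i)) ≤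
          2 ^ (n - k) * M (n - (m + 1) + 1) := by
      intro k hk
      rw [Finset.mem_Icc] at hk
      rcases lt_or_ge (n - k) m with hlt | hge
      · rw [comps_eq_empty hlt]
        simp only [Finset.sum_empty]
        positivity
      · -- n - k ≥ m, so k ≤ n - m
        have hsum : (∑ s ∈ comps m (n - k), ∏ i, M ((Fin.cons k s : Fin (m+1) → ℕ) i)) =
            M k * ∑ s ∈ comps m (n - k), ∏ i, M (s i) := by
          rw [Finset.mul_sum]
          refine Finset.sum_congr rfl fun s _ => ?_
          rw [Fin.prod_univ_succ]
          simp
        rw [hsum]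
        calc M k * ∑ s ∈ comps m (n - k), ∏ i, M (s i)
            ≤ M k * (2 ^ (n - k) * M (n - k - m + 1)) := by
              have := ih (n - k)
              have hk0 : 0 < M k := hpos k hk.1
              nlinarith
          _ = 2 ^ (n - k) * (M k * M (n - k - m + 1)) := by ring
          _ ≤ 2 ^ (n - k) * M (n - (m + 1) + 1) := by
              have hle : M k * M (n - k - m + 1) ≤ M (k + (n - k - m + 1) - 1) :=
                hM k hk.1 _ (by omega)
              have heq : k + (n - k - m + 1) - 1 = n - (m + 1) + 1 := by omega
              rw [heq] at hle
              have : (0:ℝ) < 2 ^ (n - k) := by positivity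
              nlinarith
    calc (∑ k ∈ Finset.Icc 1 n, ∑ s ∈ comps m (n - k), ∏ i, M ((Fin.cons k s : Fin (m+1) → ℕ) i))
        ≤ ∑ k ∈ Finset.Icc 1 n, 2 ^ (n - k) * M (n - (m + 1) + 1) :=
          Finset.sum_le_sum hterm
      _ = (∑ k ∈ Finset.Icc 1 n, (2:ℝ) ^ (n - k)) * M (n - (m + 1) + 1) := by
          rw [Finset.sum_mul]
      _ ≤ 2 ^ n * M (n - (m + 1) + 1) := by
          have hs : (∑ k ∈ Finset.Icc 1 n, (2:ℝ) ^ (n - k)) ≤ 2 ^ n := by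
            have hre : (∑ k ∈ Finset.Icc 1 n, (2:ℝ) ^ (n - k)) =
                ∑ j ∈ Finset.range n, (2:ℝ) ^ j := by
              refine Finset.sum_nbij' (fun k => n - k) (fun j => n - j) ?_ ?_ ?_ ?_ ?_
              · intro k hk; rw [Finset.mem_Icc] at hk; rw [Finset.mem_range]; omega
              · intro j hj; rw [Finset.mem_range] at hj; rw [Finset.mem_Icc]; omega
              · intro k hk; rw [Finset.mem_Icc] at hk; omega
              · intro j hj; rw [Finset.mem_range] at hj; omega
              · intro k _; rfl
            rw [hre, geom_sum_eq (by norm_num : (2:ℝ) ≠ 1)]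
            have : (0:ℝ) < 2 ^ n := by positivity
            nlinarith
          nlinarith
/-- if `M_n M_m ≤ M_{n+m-1}`, the class `z·ℂ[[z]]_{(M_n)}` is closed
under composition. -/
theorem stmt11 (M : ℕ → ℝ) (hpos : ∀ n : ℕ, 1 ≤ n → 0 < M n)
    (hM : ∀ n : ℕ, 1 ≤ n → ∀ m : ℕ, 1 ≤ m → M n * M m ≤ M (n + m - 1))
    (f g : ℕ → ℂ) (hf : InClass M f) (hg : InClass M g) :
    InClass M (compCoef f g) := by
  obtain ⟨a₁, ha₁, a₂, ha₂, hfb⟩ := hf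
  obtain ⟨b₁, hb₁, b₂, hb₂, hgb⟩ := hg
  set K : ℝ := max (a₂ * b₁) 1 with hKdef
  have hK1 : (1:ℝ) ≤ K := le_max_right _ _
  have hKpos : (0:ℝ) < K := lt_of_lt_of_le one_pos hK1
  have hKab : a₂ * b₁ ≤ K := le_max_left _ _
  refine ⟨a₁, ha₁, 4 * b₂ * K, by positivity, fun n hn => ?_⟩
  have hMn := hpos n hn
  have hterm : ∀ m ∈ Finset.Icc 1 n,
      ‖f m * ∑ t ∈ comps m n, ∏ i, g (t i)‖ ≤
        a₁ * (a₂ * b₁) ^ m * (2 * b₂) ^ n * M n := by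
    intro m hm
    rw [Finset.mem_Icc] at hm
    have hfm := hfb m hm.1
    have hMm := hpos m hm.1
    have hM2 := hpos (n - m + 1) (by omega)
    have hMprod : M m * M (n - m + 1) ≤ M n := by
      have h := hM m hm.1 (n - m + 1) (by omega)
      rwa [show m + (n - m + 1) - 1 = n by omega] at h
    have hinner : ‖∑ t ∈ comps m n, ∏ i, g (t i)‖ ≤
        b₁ ^ m * b₂ ^ n * (2 ^ n * M (n - m + 1)) := by
      calc ‖∑ t ∈ comps m n, ∏ i, g (t i)‖
          ≤ ∑ t ∈ comps m n, ∏ i, ‖g (t i)‖ := by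
            refine (norm_sum_le _ _).trans (Finset.sum_le_sum fun t _ => ?_)
            rw [norm_prod]
        _ ≤ ∑ t ∈ comps m n, b₁ ^ m * b₂ ^ n * ∏ i, M (t i) := by
            refine Finset.sum_le_sum fun t ht => ?_
            rw [mem_comps] at ht
            calc (∏ i, ‖g (t i)‖)
                ≤ ∏ i, b₁ * b₂ ^ (t i) * M (t i) :=
                  Finset.prod_le_prod (fun i _ => norm_nonneg _)
                    (fun i _ => hgb (t i) (ht.2 i))
              _ = b₁ ^ m * b₂ ^ n * ∏ i, M (t i) := by
                  rw [Finset.prod_mul_distrib, Finset.prod_mul_distrib,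
                    Finset.prod_const, Finset.prod_pow_eq_pow_sum, ht.1]
                  simp
        _ = b₁ ^ m * b₂ ^ n * ∑ t ∈ comps m n, ∏ i, M (t i) := by
            rw [Finset.mul_sum]
        _ ≤ b₁ ^ m * b₂ ^ n * (2 ^ n * M (n - m + 1)) := by
            have hk := key_bound M hpos hM m hm.1 n
            have : (0:ℝ) ≤ b₁ ^ m * b₂ ^ n := by positivity
            exact mul_le_mul_of_nonneg_left hk this
    calc ‖f m * ∑ t ∈ comps m n, ∏ i, g (t i)‖
        = ‖f m‖ * ‖∑ t ∈ comps m n, ∏ i, g (t i)‖ := norm_mul _ _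
      _ ≤ (a₁ * a₂ ^ m * M m) * (b₁ ^ m * b₂ ^ n * (2 ^ n * M (n - m + 1))) := by
          refine mul_le_mul hfm hinner (norm_nonneg _) ?_
          positivity
      _ = a₁ * (a₂ * b₁) ^ m * (2 * b₂) ^ n * (M m * M (n - m + 1)) := by
          rw [mul_pow, mul_pow]; ring
      _ ≤ a₁ * (a₂ * b₁) ^ m * (2 * b₂) ^ n * M n := by
          have hc : (0:ℝ) ≤ a₁ * (a₂ * b₁) ^ m * (2 * b₂) ^ n := by positivity
          exact mul_le_mul_of_nonneg_left hMprod hc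
  have h2n : (n : ℝ) ≤ 2 ^ n := by
    exact_mod_cast (Nat.lt_two_pow_self (n := n)).le
  calc ‖compCoef f g n‖
      ≤ ∑ m ∈ Finset.Icc 1 n, a₁ * (a₂ * b₁) ^ m * (2 * b₂) ^ n * M n :=
        (norm_sum_le _ _).trans (Finset.sum_le_sum hterm)
    _ ≤ ∑ m ∈ Finset.Icc 1 n, a₁ * K ^ n * (2 * b₂) ^ n * M n := by
        refine Finset.sum_le_sum fun m hm => ?_
        rw [Finset.mem_Icc] at hm
        have h1 : (a₂ * b₁) ^ m ≤ K ^ m :=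
          pow_le_pow_left₀ (by positivity) hKab m
        have h2 : K ^ m ≤ K ^ n := pow_le_pow_right₀ hK1 hm.2
        have hc : (0:ℝ) ≤ a₁ * ((2 * b₂) ^ n * M n) := by positivity
        nlinarith [pow_pos hKpos n, pow_pos (by positivity : (0:ℝ) < 2 * b₂) n]
    _ = (n : ℝ) * (a₁ * K ^ n * (2 * b₂) ^ n * M n) := by
        rw [Finset.sum_const, Nat.card_Icc]
        simp [nsmul_eq_mul]
    _ ≤ a₁ * (4 * b₂ * K) ^ n * M n := by
        have heq : (4 * b₂ * K) ^ n = 2 ^ n * ((2 * b₂) ^ n * K ^ n) := by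
          rw [show (4:ℝ) * b₂ * K = 2 * (2 * b₂) * K by ring, mul_pow, mul_pow]
          ring
        rw [heq]
        have hp1 : (0:ℝ) < K ^ n := pow_pos hKpos n
        have hp2 : (0:ℝ) < (2 * b₂) ^ n := pow_pos (by positivity) n
        nlinarith [mul_pos hp1 hp2, mul_pos (mul_pos ha₁ hMn) (mul_pos hp1 hp2)]
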